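/- Let Γ be a finite sequence of formulas and A a formula over the language {1, ⊥, ∧, ∨, *, \}. If the sequent Γ ⇒ A is provable in WL, then the sequent Γ^t ⇒ A^t is provable in BPC. -/

import Mathlib

inductive WLForm : Type
  | var : Nat → WLForm
  | one : WLForm
  | bot : WLForm
  | conj : WLForm → WLForm → WLForm
  | disj : WLForm → WLForm → WLForm
  | fuse : WLForm → WLForm → WLForm
  | ldiv : WLForm → WLForm → WLForm
  deriving DecidableEq

/-- The sequent calculus `WL` (weak Lambek): single-conclusion sequents over
`{1, ⊥, ∧, ∨, *, \}`, with initial sequents `φ ⇒ φ`, `Γ, ⊥, Σ ⇒ Δ`, `⇒ 1`,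
the cut rule, `(1w)`, the left/right rules for `∧`, `∨`, `*` and `(R\)`.
No structural rules. -/
inductive WL : List WLForm → Option WLForm → Prop
  | id (A : WLForm) : WL [A] (some A)
  | botL (X Y : List WLForm) (D : Option WLForm) : WL (X ++ WLForm.bot :: Y) D
  | oneR : WL [] (some WLForm.one)
  | cut {X Y Z : List WLForm} {D : Option WLForm} {A : WLForm} :
      WL X (some A) → WL (Y ++ A :: Z) D → WL (Y ++ X ++ Z) D
  | oneW {X Y : List WLForm} {D : Option WLForm} :
      WL (X ++ Y) D → WL (X ++ WLForm.one :: Y) D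
  | conjL1 {X Y : List WLForm} {D : Option WLForm} {A : WLForm} (B : WLForm) :
      WL (X ++ A :: Y) D → WL (X ++ WLForm.conj A B :: Y) D
  | conjL2 {X Y : List WLForm} {D : Option WLForm} {B : WLForm} (A : WLForm) :
      WL (X ++ B :: Y) D → WL (X ++ WLForm.conj A B :: Y) D
  | conjR {X : List WLForm} {A B : WLForm} :
      WL X (some A) → WL X (some B) → WL X (some (WLForm.conj A B))
  | disjL {X Y : List WLForm} {D : Option WLForm} {A B : WLForm} :
      WL (X ++ A :: Y) D → WL (X ++ B :: Y) D → WL (X ++ WLForm.disj A B :: Y) D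
  | disjR1 {X : List WLForm} {A : WLForm} (B : WLForm) :
      WL X (some A) → WL X (some (WLForm.disj A B))
  | disjR2 {X : List WLForm} {B : WLForm} (A : WLForm) :
      WL X (some B) → WL X (some (WLForm.disj A B))
  | fuseL {X Y : List WLForm} {D : Option WLForm} {A B : WLForm} :
      WL (X ++ A :: B :: Y) D → WL (X ++ WLForm.fuse A B :: Y) D
  | fuseR {X Y : List WLForm} {A B : WLForm} :
      WL X (some A) → WL Y (some B) → WL (X ++ Y) (some (WLForm.fuse A B))
  | ldivR {X : List WLForm} {A B : WLForm} :
      WL (A :: X) (some B) → WL X (some (WLForm.ldiv A B))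

inductive BForm : Type
  | var : Nat → BForm
  | top : BForm
  | bot : BForm
  | conj : BForm → BForm → BForm
  | disj : BForm → BForm → BForm
  | imp : BForm → BForm → BForm
  deriving DecidableEq

/-- The sequent calculus `BPC` (on multisets) augmented with the initial sequents
`⇒ γ` for `γ ∈ H`.  Plain `BPC` is `BPCfrom ∅`. -/
inductive BPCfrom (H : Set BForm) : Multiset BForm → Multiset BForm → Prop
  | hyp {A : BForm} : A ∈ H → BPCfrom H 0 {A}
  | id (U X : Multiset BForm) (A : BForm) : BPCfrom H (A ::ₘ U) (A ::ₘ X)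
  | topR (U X : Multiset BForm) : BPCfrom H U (BForm.top ::ₘ X)
  | botL (U X : Multiset BForm) : BPCfrom H (BForm.bot ::ₘ U) X
  | conjL {U X : Multiset BForm} {A B : BForm} :
      BPCfrom H (A ::ₘ B ::ₘ U) X → BPCfrom H (BForm.conj A B ::ₘ U) X
  | conjR {U X : Multiset BForm} {A B : BForm} :
      BPCfrom H U (A ::ₘ X) → BPCfrom H U (B ::ₘ X) → BPCfrom H U (BForm.conj A B ::ₘ X)
  | disjL {U X : Multiset BForm} {A B : BForm} :
      BPCfrom H (A ::ₘ U) X → BPCfrom H (B ::ₘ U) X → BPCfrom H (BForm.disj A B ::ₘ U) X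
  | disjR {U X : Multiset BForm} {A B : BForm} :
      BPCfrom H U (A ::ₘ B ::ₘ X) → BPCfrom H U (BForm.disj A B ::ₘ X)
  | impR {U : Multiset BForm} {A B : BForm} (X : Multiset BForm) :
      BPCfrom H (A ::ₘ U) {B} → BPCfrom H U (BForm.imp A B ::ₘ X)
  | distr {U X : Multiset BForm} {A B C : BForm} :
      BPCfrom H (BForm.conj A B ::ₘ U) X → BPCfrom H (BForm.conj A C ::ₘ U) X →
      BPCfrom H (BForm.conj A (BForm.disj B C) ::ₘ U) X
  | tran {U : Multiset BForm} {A B C : BForm} (X : Multiset BForm) :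
      BPCfrom H U {BForm.imp A B} → BPCfrom H U {BForm.imp B C} →
      BPCfrom H U (BForm.imp A C ::ₘ X)
  | fconj {U : Multiset BForm} {A B C : BForm} (X : Multiset BForm) :
      BPCfrom H U {BForm.imp A B} → BPCfrom H U {BForm.imp A C} →
      BPCfrom H U (BForm.imp A (BForm.conj B C) ::ₘ X)
  | fdisj {U : Multiset BForm} {A B C : BForm} (X : Multiset BForm) :
      BPCfrom H U {BForm.imp A C} → BPCfrom H U {BForm.imp B C} →
      BPCfrom H U (BForm.imp (BForm.disj A B) C ::ₘ X)
  | cut {U1 U2 X1 X2 : Multiset BForm} {A : BForm} :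
      BPCfrom H U1 (A ::ₘ X1) → BPCfrom H (A ::ₘ U2) X2 →
      BPCfrom H (U1 + U2) (X1 + X2)

/-- The translation `t` into the language `{∧, ∨, →, ⊤, ⊥}`. -/
def trB : WLForm → BForm
  | WLForm.var n => BForm.var n
  | WLForm.one => BForm.top
  | WLForm.bot => BForm.bot
  | WLForm.conj a b => BForm.conj (trB a) (trB b)
  | WLForm.disj a b => BForm.disj (trB a) (trB b)
  | WLForm.fuse a b => BForm.conj (trB a) (trB b)
  | WLForm.ldiv a b => BForm.imp (trB a) (trB b)


def trD : Option WLForm → Multiset BForm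
  | none => 0
  | some A => {trB A}

lemma map_mid (X Y : List WLForm) (A : WLForm) :
    (((X ++ A :: Y).map trB : List BForm) : Multiset BForm)
      = trB A ::ₘ (((X ++ Y).map trB : List BForm) : Multiset BForm) := by
  rw [Multiset.cons_coe, Multiset.coe_eq_coe]
  simp only [List.map_append, List.map_cons]
  exact List.perm_middle

lemma map_cut (X Y Z : List WLForm) :
    (((Y ++ X ++ Z).map trB : List BForm) : Multiset BForm)
      = ((X.map trB : List BForm) : Multiset BForm)
        + (((Y ++ Z).map trB : List BForm) : Multiset BForm) := by
  simp only [List.map_append, ← Multiset.coe_add, Multiset.coe_eq_coe]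
  have h1 : List.map trB Y ++ List.map trB X ++ List.map trB Z
      |>.Perm ((List.map trB X ++ List.map trB Y) ++ List.map trB Z) :=
    List.Perm.append_right _ List.perm_append_comm
  simpa [List.append_assoc] using h1

lemma rot3 {α : Type*} (a b c : α) (s : Multiset α) :
    a ::ₘ b ::ₘ c ::ₘ s = b ::ₘ c ::ₘ a ::ₘ s := by
  rw [Multiset.cons_swap a b, Multiset.cons_swap a c]

lemma wkL {U X : Multiset BForm} (C : BForm)
    (h : BPCfrom ∅ U X) : BPCfrom ∅ (C ::ₘ U) X := by
  induction h with
  | hyp hA => exact absurd hA (Set.notMem_empty _)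
  | id U X A => rw [Multiset.cons_swap]; exact .id _ _ _
  | topR U X => exact .topR _ _
  | botL U X => rw [Multiset.cons_swap]; exact .botL _ _
  | conjL _ ih =>
      rw [Multiset.cons_swap]
      exact .conjL (by rw [← rot3]; exact ih)
  | conjR _ _ ih1 ih2 => exact .conjR ih1 ih2
  | disjL _ _ ih1 ih2 =>
      rw [Multiset.cons_swap]
      exact .disjL (by rw [Multiset.cons_swap]; exact ih1)
        (by rw [Multiset.cons_swap]; exact ih2)
  | disjR _ ih => exact .disjR ih
  | impR X _ ih => exact .impR X (by rw [Multiset.cons_swap]; exact ih)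
  | distr _ _ ih1 ih2 =>
      rw [Multiset.cons_swap]
      exact .distr (by rw [Multiset.cons_swap]; exact ih1)
        (by rw [Multiset.cons_swap]; exact ih2)
  | tran X _ _ ih1 ih2 => exact .tran X ih1 ih2
  | fconj X _ _ ih1 ih2 => exact .fconj X ih1 ih2
  | fdisj X _ _ ih1 ih2 => exact .fdisj X ih1 ih2
  | @cut U1 U2 X1 X2 A h1 h2 ih1 ih2 =>
      have := BPCfrom.cut h1 (by rw [Multiset.cons_swap]; exact ih2)
      rwa [Multiset.add_cons] at this

lemma wkLs {U X : Multiset BForm} (V : Multiset BForm)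
    (h : BPCfrom ∅ U X) : BPCfrom ∅ (V + U) X := by
  induction V using Multiset.induction with
  | empty => simpa using h
  | cons a V ih => rw [Multiset.cons_add]; exact wkL a ih

lemma wkR {U X : Multiset BForm} (C : BForm)
    (h : BPCfrom ∅ U X) : BPCfrom ∅ U (C ::ₘ X) := by
  induction h with
  | hyp hA => exact absurd hA (Set.notMem_empty _)
  | id U X A => rw [Multiset.cons_swap]; exact .id _ _ _
  | topR U X => rw [Multiset.cons_swap]; exact .topR _ _
  | botL U X => exact .botL _ _
  | conjL _ ih => exact .conjL ih
  | conjR _ _ ih1 ih2 =>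
      rw [Multiset.cons_swap]
      exact .conjR (by rw [Multiset.cons_swap]; exact ih1)
        (by rw [Multiset.cons_swap]; exact ih2)
  | disjL _ _ ih1 ih2 => exact .disjL ih1 ih2
  | disjR _ ih => rw [Multiset.cons_swap]; exact .disjR (by rw [← rot3]; exact ih)
  | impR X h _ => rw [Multiset.cons_swap]; exact .impR _ h
  | distr _ _ ih1 ih2 => exact .distr ih1 ih2
  | tran X h1 h2 _ _ => rw [Multiset.cons_swap]; exact .tran _ h1 h2
  | fconj X h1 h2 _ _ => rw [Multiset.cons_swap]; exact .fconj _ h1 h2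
  | fdisj X h1 h2 _ _ => rw [Multiset.cons_swap]; exact .fdisj _ h1 h2
  | @cut U1 U2 X1 X2 A h1 h2 ih1 ih2 =>
      have := BPCfrom.cut (by rw [Multiset.cons_swap]; exact ih1) h2
      rwa [Multiset.cons_add] at this

lemma trD_some (A : WLForm) : trD (some A) = trB A ::ₘ 0 := rfl

lemma main {G : List WLForm} {D : Option WLForm} (h : WL G D) :
    BPCfrom ∅ ((G.map trB : List BForm) : Multiset BForm) (trD D) := by
  induction h with
  | id A => simpa [trD] using BPCfrom.id 0 0 (trB A)
  | botL X Y D => rw [map_mid]; exact .botL _ _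
  | oneR => simpa [trD, trB] using BPCfrom.topR 0 0
  | @cut X Y Z D A h1 h2 ih1 ih2 =>
      rw [map_mid] at ih2
      rw [trD_some] at ih1
      have := BPCfrom.cut ih1 ih2
      rw [map_cut]
      simpa using this
  | @oneW X Y D h ih =>
      rw [map_mid]
      exact wkL _ ih
  | @conjL1 X Y D A B h ih =>
      rw [map_mid] at ih ⊢
      exact .conjL (by rw [Multiset.cons_swap]; exact wkL (trB B) ih)
  | @conjL2 X Y D B A h ih =>
      rw [map_mid] at ih ⊢
      exact .conjL (wkL (trB A) ih)
  | conjR h1 h2 ih1 ih2 =>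
      rw [trD_some] at ih1 ih2 ⊢
      exact .conjR ih1 ih2
  | disjL h1 h2 ih1 ih2 =>
      rw [map_mid] at ih1 ih2 ⊢
      exact .disjL ih1 ih2
  | @disjR1 X A B h ih =>
      rw [trD_some] at ih ⊢
      exact .disjR (by rw [Multiset.cons_swap]; exact wkR (trB B) ih)
  | @disjR2 X B A h ih =>
      rw [trD_some] at ih ⊢
      exact .disjR (wkR (trB A) ih)
  | @fuseL X Y D A B h ih =>
      rw [map_mid, map_mid] at ih
      rw [map_mid]
      exact .conjL ih
  | @fuseR X Y A B h1 h2 ih1 ih2 =>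
      rw [trD_some] at ih1 ih2
      rw [trD_some]
      have e1 : BPCfrom ∅ (((X.map trB : List BForm) : Multiset BForm)
          + ((Y.map trB : List BForm) : Multiset BForm)) (trB A ::ₘ 0) := by
        have := wkLs (((Y.map trB : List BForm) : Multiset BForm)) ih1
        rwa [add_comm] at this
      have e2 : BPCfrom ∅ (((X.map trB : List BForm) : Multiset BForm)
          + ((Y.map trB : List BForm) : Multiset BForm)) (trB B ::ₘ 0) :=
        wkLs _ ih2
      have := BPCfrom.conjR e1 e2
      simp only [List.map_append, ← Multiset.coe_add] at this ⊢
      simpa [trB] using this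
  | @ldivR X A B h ih =>
      simp only [List.map_cons, ← Multiset.cons_coe] at ih
      exact .impR 0 ih

theorem statement_6 (G : List WLForm) (A : WLForm) (h : WL G (some A)) :
    BPCfrom ∅ ((G.map trB : List BForm) : Multiset BForm) {trB A} := by
  exact main h
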